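/- Fixed-design GLS setting: for each k ∈ {1,…,n} let X_{-k} ∈ ℝ^{(n−1)×p} be the design matrix with the k-th row x_k ∈ ℝ^p deleted, let Σ_{-k} = (Cov(y_i, y_j))_{i,j≠k} be invertible with X_{-k}^t Σ_{-k}^{-1} X_{-k} invertible, and let the k-th row of the zero-diagonal CV hat matrix H (in its off-diagonal positions) be the GLS hat vector h_k = x_k^t (X_{-k}^t Σ_{-k}^{-1} X_{-k})^{-1} X_{-k}^t Σ_{-k}^{-1}. Under the hypotheses of Theorem 2 and with Cov((y_tr)_j, y_te) = 0 for all j, the CV bias of GLS equals w_cv = (2/n) ∑_{k=1}^n x_k^t (X_{-k}^t Σ_{-k}^{-1} X_{-k})^{-1} X_{-k}^t Σ_{-k}^{-1} σ_{-k,k}, where σ_{-k,k} = (Cov(y_j, y_k))_{j≠k} ∈ ℝ^{n−1}. (The paper's fixed-design formula for w_cv(GLS), showing CV is biased for GLS whenever the training responses are correlated even though GLS does not explicitly exploit the correlation.) -/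

import Mathlib

open MeasureTheory Matrix

/-- Variance `E[(U - E U)^2]` of a real random variable. -/
noncomputable def eVar {Ω : Type*} [MeasurableSpace Ω] (μ : Measure Ω) (U : Ω → ℝ) : ℝ :=
  ∫ ω, (U ω - ∫ ω', U ω' ∂μ) ^ 2 ∂μ

/-- Covariance `E[(U - E U)(V - E V)]` of two real random variables. -/
noncomputable def eCov {Ω : Type*} [MeasurableSpace Ω] (μ : Measure Ω) (U V : Ω → ℝ) : ℝ :=
  ∫ ω, (U ω - ∫ ω', U ω' ∂μ) * (V ω - ∫ ω', V ω' ∂μ) ∂μ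

section helpers
variable {Ω : Type*} [MeasurableSpace Ω] {μ : Measure Ω} [IsProbabilityMeasure μ]

lemma memL2_mul_int {U V : Ω → ℝ} (hU : MemLp U 2 μ) (hV : MemLp V 2 μ) :
    Integrable (fun ω => U ω * V ω) μ := by
  have h : (1 : ENNReal) / 1 = 1 / 2 + 1 / 2 := by
    rw [ENNReal.div_add_div_same, one_add_one_eq_two,
      ENNReal.div_self two_ne_zero ENNReal.ofNat_ne_top, div_one]
  have := (hV.smul hU : MemLp (U • V) 1 μ).integrable le_rfl
  exact this

lemma centered_memL2 {U : Ω → ℝ} (hU : MemLp U 2 μ) (a : ℝ) :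
    MemLp (fun ω => U ω - a) 2 μ := hU.sub (memLp_const a)

lemma integral_centered {U : Ω → ℝ} (hU : MemLp U 2 μ) :
    ∫ ω, (U ω - ∫ ω', U ω' ∂μ) ∂μ = 0 := by
  rw [integral_sub (hU.integrable one_le_two) (integrable_const _), integral_const]
  simp

lemma l2_expand {U V : Ω → ℝ} (hU : MemLp U 2 μ) (hV : MemLp V 2 μ) :
    ∫ ω, (U ω - V ω) ^ 2 ∂μ
      = eVar μ U + eVar μ V - 2 * eCov μ U V
        + ((∫ ω, U ω ∂μ) - ∫ ω, V ω ∂μ) ^ 2 := by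
  set a := ∫ ω, U ω ∂μ with ha
  set b := ∫ ω, V ω ∂μ with hb
  have hU' := centered_memL2 hU a
  have hV' := centered_memL2 hV b
  have iUU := memL2_mul_int hU' hU'
  have iVV := memL2_mul_int hV' hV'
  have iUV := memL2_mul_int hU' hV'
  have iU := hU'.integrable one_le_two
  have iV := hV'.integrable one_le_two
  have key : ∀ ω, (U ω - V ω) ^ 2
      = ((U ω - a) * (U ω - a) + (V ω - b) * (V ω - b)
          - 2 * ((U ω - a) * (V ω - b)))
        + ((2*(a-b)) * (U ω - a) - (2*(a-b)) * (V ω - b) + (a-b)^2) := by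
    intro ω; ring
  have iA1 : Integrable (fun ω => (U ω - a) * (U ω - a)
      + (V ω - b) * (V ω - b)) μ := iUU.add iVV
  have iA : Integrable (fun ω => (U ω - a) * (U ω - a) + (V ω - b) * (V ω - b)
      - 2 * ((U ω - a) * (V ω - b))) μ := iA1.sub (iUV.const_mul 2)
  have iB1 : Integrable (fun ω => (2*(a-b)) * (U ω - a)
      - (2*(a-b)) * (V ω - b)) μ := (iU.const_mul _).sub (iV.const_mul _)
  have iB : Integrable (fun ω => (2*(a-b)) * (U ω - a) - (2*(a-b)) * (V ω - b)
      + (a-b)^2) μ := iB1.add (integrable_const _)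
  rw [integral_congr_ae (ae_of_all _ key), integral_add iA iB,
    integral_sub iA1 (iUV.const_mul 2), integral_add iUU iVV,
    integral_add iB1 (integrable_const _),
    integral_sub (iU.const_mul _) (iV.const_mul _),
    integral_const_mul, integral_const_mul, integral_const_mul,
    integral_centered hU, integral_centered hV, integral_const]
  simp only [eVar, eCov, ← ha, ← hb, measure_univ, probReal_univ, ENNReal.toReal_one, smul_eq_mul, one_mul]
  have e1 : ∫ ω, (U ω - a) ^ 2 ∂μ = ∫ ω, (U ω - a) * (U ω - a) ∂μ := by
    congr 1; funext ω; ring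
  have e2 : ∫ ω, (V ω - b) ^ 2 ∂μ = ∫ ω, (V ω - b) * (V ω - b) ∂μ := by
    congr 1; funext ω; ring
  rw [e1, e2]; ring

omit [IsProbabilityMeasure μ] in
lemma eCov_comm (U V : Ω → ℝ) : eCov μ U V = eCov μ V U := by
  simp only [eCov, mul_comm]

lemma eCov_sum_left {ι : Type*} [Fintype ι] (c : ι → ℝ) (W : ι → Ω → ℝ)
    (hW : ∀ i, MemLp (W i) 2 μ) (V : Ω → ℝ) (hV : MemLp V 2 μ) :
    eCov μ (fun ω => ∑ i, c i * W i ω) V = ∑ i, c i * eCov μ (W i) V := by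
  have hm : ∫ ω, (∑ i, c i * W i ω) ∂μ = ∑ i, c i * ∫ ω, W i ω ∂μ := by
    rw [integral_finset_sum _ (fun i _ => ((hW i).integrable one_le_two).const_mul _)]
    simp [integral_const_mul]
  set mV := ∫ ω', V ω' ∂μ
  have key : ∀ ω, ((∑ i, c i * W i ω) - ∫ ω', (∑ i, c i * W i ω') ∂μ) * (V ω - mV)
      = ∑ i, c i * ((W i ω - ∫ ω', W i ω' ∂μ) * (V ω - mV)) := by
    intro ω
    rw [hm, ← Finset.sum_sub_distrib, Finset.sum_mul]
    congr 1; funext i; ring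
  simp only [eCov]
  rw [integral_congr_ae (ae_of_all _ key),
    integral_finset_sum _ (fun i _ =>
      (memL2_mul_int (centered_memL2 (hW i) _) (centered_memL2 hV _)).const_mul _)]
  simp [integral_const_mul, mV]

lemma sum_reindex {n : ℕ} (k : Fin n) (e : Fin (n - 1) → Fin n)
    (he : Function.Injective e) (hne : ∀ j, e j ≠ k) (f : Fin n → ℝ) (hf : f k = 0) :
    ∑ j, f j = ∑ j, f (e j) := by
  have himg : Finset.image e Finset.univ = Finset.univ.erase k := by
    apply Finset.eq_of_subset_of_card_le
    · intro j hj
      simp only [Finset.mem_image] at hj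
      obtain ⟨i, -, rfl⟩ := hj
      exact Finset.mem_erase.2 ⟨hne i, Finset.mem_univ _⟩
    · rw [Finset.card_erase_of_mem (Finset.mem_univ k),
        Finset.card_image_of_injective _ he]
      simp
  calc ∑ j, f j = f k + ∑ j ∈ Finset.univ.erase k, f j :=
        (Finset.add_sum_erase _ f (Finset.mem_univ k)).symm
    _ = ∑ j ∈ Finset.image e Finset.univ, f j := by rw [hf, zero_add, himg]
    _ = ∑ j, f (e j) := Finset.sum_image (fun a _ b _ h => he h)

end helpers

/-- **The paper's fixed-design formula for `w_cv(GLS)`.** When the off-diagonal entries of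
the `k`-th row of the zero-diagonal CV hat matrix `H` form the GLS hat vector
`h_k = x_k^t (X_{-k}^t Σ_{-k}^{-1} X_{-k})^{-1} X_{-k}^t Σ_{-k}^{-1}` (rows of the deleted
sample indexed via the injection `emb k : Fin (n-1) → Fin n` avoiding `k`), under the
hypotheses of Theorem 2 and `Cov(y_tr, y_te) = 0`, the CV bias equals
`w_cv = (2/n) ∑_k h_k · σ_{-k,k}` where `σ_{-k,k} = (Cov(y_j, y_k))_{j ≠ k}`. -/
theorem cv_bias_gls
    {Ω : Type*} [MeasurableSpace Ω] (μ : Measure Ω) [IsProbabilityMeasure μ]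
    (n p : ℕ) (hn : 0 < n)
    (y : Fin n → Ω → ℝ) (hy : ∀ k, MemLp (y k) 2 μ)
    (emb : Fin n → Fin (n - 1) → Fin n)
    (hembinj : ∀ k, Function.Injective (emb k))
    (hembne : ∀ k j, emb k j ≠ k)
    (x : Fin n → Fin p → ℝ)
    (Xdel : Fin n → Matrix (Fin (n - 1)) (Fin p) ℝ)
    (hXdel : ∀ k j, Xdel k j = x (emb k j))
    (Sigdel : Fin n → Matrix (Fin (n - 1)) (Fin (n - 1)) ℝ)
    (hSigdel : ∀ k i j, Sigdel k i j = eCov μ (y (emb k i)) (y (emb k j)))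
    (hSigdelinv : ∀ k, IsUnit (Sigdel k).det)
    (hXSX : ∀ k, IsUnit ((Xdel k)ᵀ * (Sigdel k)⁻¹ * Xdel k).det)
    (H : Matrix (Fin n) (Fin n) ℝ)
    (hHdiag : ∀ k, H k k = 0)
    (hHrow : ∀ k j, H k (emb k j)
      = Matrix.vecMul (x k)
          (((Xdel k)ᵀ * (Sigdel k)⁻¹ * Xdel k)⁻¹ * (Xdel k)ᵀ * (Sigdel k)⁻¹) j)
    (ytr : Fin (n - 1) → Ω → ℝ) (hytr : ∀ j, MemLp (ytr j) 2 μ)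
    (yte : Ω → ℝ) (hyte : MemLp yte 2 μ)
    (hte : Fin (n - 1) → ℝ)
    (hmean : ∀ k, ∫ ω, y k ω ∂μ = ∫ ω, yte ω ∂μ)
    (hvar : ∀ k, eVar μ (y k) = eVar μ yte)
    (hmeanH : ∀ k, ∫ ω, (∑ j, H k j * y j ω) ∂μ = ∫ ω, (∑ j, hte j * ytr j ω) ∂μ)
    (hvarH : ∀ k, eVar μ (fun ω => ∑ j, H k j * y j ω)
        = eVar μ (fun ω => ∑ j, hte j * ytr j ω))
    (hc : ∀ j, eCov μ (ytr j) yte = 0) :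
    (∫ ω, (yte ω - ∑ j, hte j * ytr j ω) ^ 2 ∂μ)
        - (1 / (n : ℝ)) * ∫ ω, ∑ k, (y k ω - ∑ j, H k j * y j ω) ^ 2 ∂μ
      = (2 / (n : ℝ)) * ∑ k,
          (Matrix.vecMul (x k)
              (((Xdel k)ᵀ * (Sigdel k)⁻¹ * Xdel k)⁻¹ * (Xdel k)ᵀ * (Sigdel k)⁻¹))
            ⬝ᵥ (fun j => eCov μ (y (emb k j)) (y k)) := by
  have hS : MemLp (fun ω => ∑ j, hte j * ytr j ω) 2 μ :=
    memLp_finset_sum _ (fun j _ => (hytr j).const_mul _)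
  have hT : ∀ k, MemLp (fun ω => ∑ j, H k j * y j ω) 2 μ := fun k =>
    memLp_finset_sum _ (fun j _ => (hy j).const_mul _)
  have hcovS : eCov μ yte (fun ω => ∑ j, hte j * ytr j ω) = 0 := by
    rw [eCov_comm, eCov_sum_left hte ytr hytr yte hyte]
    simp [hc]
  have hAeq : ∫ ω, (yte ω - ∑ j, hte j * ytr j ω) ^ 2 ∂μ
      = eVar μ yte + eVar μ (fun ω => ∑ j, hte j * ytr j ω)
        + ((∫ ω, yte ω ∂μ) - ∫ ω, (∑ j, hte j * ytr j ω) ∂μ) ^ 2 := by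
    rw [l2_expand hyte hS, hcovS]; ring
  -- per-k expansion
  have hk : ∀ k, ∫ ω, (y k ω - ∑ j, H k j * y j ω) ^ 2 ∂μ
      = (∫ ω, (yte ω - ∑ j, hte j * ytr j ω) ^ 2 ∂μ)
        - 2 * eCov μ (y k) (fun ω => ∑ j, H k j * y j ω) := by
    intro k
    rw [l2_expand (hy k) (hT k), hvar k, hvarH k, hmean k, hmeanH k, hAeq]
    ring
  -- integrability of each squared residual
  have hint : ∀ k, Integrable (fun ω => (y k ω - ∑ j, H k j * y j ω) ^ 2) μ := by
    intro k
    have hd : MemLp (fun ω => y k ω - ∑ j, H k j * y j ω) 2 μ := (hy k).sub (hT k)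
    have := memL2_mul_int hd hd
    simpa [pow_two] using this
  have hsum : ∫ ω, ∑ k, (y k ω - ∑ j, H k j * y j ω) ^ 2 ∂μ
      = ∑ k, ∫ ω, (y k ω - ∑ j, H k j * y j ω) ^ 2 ∂μ :=
    integral_finset_sum _ (fun k _ => hint k)
  -- covariance term as a reindexed sum, matching the RHS
  have hcovk : ∀ k, eCov μ (y k) (fun ω => ∑ j, H k j * y j ω)
      = (Matrix.vecMul (x k)
          (((Xdel k)ᵀ * (Sigdel k)⁻¹ * Xdel k)⁻¹ * (Xdel k)ᵀ * (Sigdel k)⁻¹))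
        ⬝ᵥ (fun j => eCov μ (y (emb k j)) (y k)) := by
    intro k
    rw [eCov_comm, eCov_sum_left (H k) y hy (y k) (hy k)]
    have hre : ∑ j, H k j * eCov μ (y j) (y k)
        = ∑ j, H k (emb k j) * eCov μ (y (emb k j)) (y k) :=
      sum_reindex k (emb k) (hembinj k) (hembne k)
        (fun j => H k j * eCov μ (y j) (y k)) (by simp [hHdiag k])
    rw [hre]
    simp only [dotProduct]
    exact Finset.sum_congr rfl (fun j _ => by rw [hHrow k j])
  -- assemble
  rw [hsum]
  have hsum2 : ∑ k, ∫ ω, (y k ω - ∑ j, H k j * y j ω) ^ 2 ∂μ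
      = (n : ℝ) * (∫ ω, (yte ω - ∑ j, hte j * ytr j ω) ^ 2 ∂μ)
        - 2 * ∑ k, (Matrix.vecMul (x k)
            (((Xdel k)ᵀ * (Sigdel k)⁻¹ * Xdel k)⁻¹ * (Xdel k)ᵀ * (Sigdel k)⁻¹))
          ⬝ᵥ (fun j => eCov μ (y (emb k j)) (y k)) := by
    rw [Finset.sum_congr rfl (fun k _ => by rw [hk k, hcovk k]),
      Finset.sum_sub_distrib, Finset.sum_const, Finset.card_univ, Fintype.card_fin,
      ← Finset.mul_sum]
    push_cast
    ring
  rw [hsum2]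
  have hn' : (n : ℝ) ≠ 0 := Nat.cast_ne_zero.2 hn.ne'
  field_simp
  ring
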